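/- Let G be a Cohen-Macaulay permutation graph and J(G) its cover ideal. Then J(G) satisfies the strong persistence property, i.e., J(G)^{k+1} : J(G) = J(G)^k for all k ≥ 1. -/

import Mathlib

open MvPolynomial
open scoped Classical
set_option synthInstance.maxHeartbeats 1000000
set_option maxHeartbeats 1000000
set_option linter.unusedVariables false

/-- The permutation graph `G(σ)` of a permutation `σ` of `Fin n`:
`i` and `j` with `i < j` are adjacent iff `j` appears before `i` in the list
`σ 1, …, σ n`. -/
def permGraph {n : ℕ} (σ : Equiv.Perm (Fin n)) : SimpleGraph (Fin n) where
  Adj i j := (i < j ∧ σ.symm j < σ.symm i) ∨ (j < i ∧ σ.symm i < σ.symm j)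
  symm := ⟨fun i j h => Or.symm h⟩
  loopless := ⟨fun i h => by rcases h with ⟨h, -⟩ | ⟨h, -⟩ <;> exact absurd h (lt_irrefl i)⟩

/-- A finite simple graph is a permutation graph if it is isomorphic to `G(σ)` for some
permutation `σ`. -/
def IsPermutationGraph {V : Type*} (G : SimpleGraph V) [Fintype V] : Prop :=
  ∃ σ : Equiv.Perm (Fin (Fintype.card V)), Nonempty (G ≃g permGraph σ)

/-- `C` is a vertex cover of `G`. -/
def IsVertexCover {V : Type*} (G : SimpleGraph V) (C : Set V) : Prop :=
  ∀ ⦃u v⦄, G.Adj u v → u ∈ C ∨ v ∈ C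

/-- `C` is a minimal vertex cover of `G`. -/
def IsMinimalVertexCover {V : Type*} (G : SimpleGraph V) (C : Set V) : Prop :=
  IsVertexCover G C ∧ ∀ D ⊆ C, IsVertexCover G D → D = C

/-- `G` is unmixed: all minimal vertex covers have the same cardinality. -/
def Unmixed {V : Type*} (G : SimpleGraph V) : Prop :=
  ∀ C D : Set V, IsMinimalVertexCover G C → IsMinimalVertexCover G D → C.ncard = D.ncard

/-- The edge ideal `I(G)` of a graph. -/
noncomputable def edgeIdeal (K : Type*) [Field K] {V : Type*} (G : SimpleGraph V) :
    Ideal (MvPolynomial V K) :=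
  Ideal.span {p | ∃ u v, G.Adj u v ∧ p = X u * X v}

/-- The irrelevant (graded maximal) ideal `(x_1, …, x_n)` of the polynomial ring. -/
noncomputable def irrelevantIdeal (K : Type*) [Field K] {V : Type*} :
    Ideal (MvPolynomial V K) :=
  Ideal.span (Set.range X)

/-- `S/I` is a Cohen-Macaulay ring, where `S` is a polynomial ring over a field and `I` a
graded ideal: there is a regular sequence contained in the graded maximal ideal whose
length equals the Krull dimension of `S/I`. -/
def QuotIsCM (K : Type*) [Field K] {V : Type*} (I : Ideal (MvPolynomial V K)) : Prop :=
  ∃ (d : ℕ) (f : Fin d → (MvPolynomial V K ⧸ I)),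
    (∀ i, f i ∈ (irrelevantIdeal K).map (Ideal.Quotient.mk I)) ∧
    RingTheory.Sequence.IsRegular (MvPolynomial V K ⧸ I) (List.ofFn f) ∧
    (d : WithBot (WithTop ℕ)) = ringKrullDim (MvPolynomial V K ⧸ I)

/-- The cover ideal `J(G)` of a graph: generated by the monomials whose support is a
vertex cover. -/
noncomputable def coverIdeal (K : Type*) [Field K] {V : Type*} (G : SimpleGraph V) :
    Ideal (MvPolynomial V K) :=
  Ideal.span {p | ∃ C : Finset V, IsVertexCover G ↑C ∧ p = ∏ i ∈ C, X i}

section AuxCoverIdeal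

variable {n : ℕ}

noncomputable def cmon (C : Finset (Fin n)) : Fin n →₀ ℕ := ∑ i ∈ C, Finsupp.single i 1

lemma cmon_apply (C : Finset (Fin n)) (v : Fin n) :
    cmon C v = if v ∈ C then 1 else 0 := by
  classical
  rw [cmon, Finsupp.finset_sum_apply]
  simp [Finsupp.single_apply, Finset.sum_ite_eq' C v (fun _ => 1)]

variable (G : SimpleGraph (Fin n))

def SumCovers (m : ℕ) (d : Fin n →₀ ℕ) : Prop :=
  ∃ D : Multiset (Finset (Fin n)), Multiset.card D = m ∧
    (∀ C ∈ D, IsVertexCover G ↑C) ∧ (D.map cmon).sum ≤ d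


lemma sumCovers_mono {G : SimpleGraph (Fin n)} {m : ℕ} {d d' : Fin n →₀ ℕ}
    (h : SumCovers G m d) (hle : d ≤ d') : SumCovers G m d' := by
  obtain ⟨D, h1, h2, h3⟩ := h
  exact ⟨D, h1, h2, le_trans h3 hle⟩

lemma prod_X_eq_monomial_cmon (K : Type*) [Field K] (C : Finset (Fin n)) :
    (∏ i ∈ C, (X i : MvPolynomial (Fin n) K)) = monomial (cmon C) 1 := by
  classical
  induction C using Finset.induction with
  | empty => simp [cmon]
  | @insert a s h ih =>
      have hc : cmon (insert a s) = Finsupp.single a 1 + cmon s := by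
        rw [cmon, cmon, Finset.sum_insert h]
      rw [Finset.prod_insert h, ih, hc, X, monomial_mul, one_mul]

lemma msum_apply (D : Multiset (Fin n →₀ ℕ)) (v : Fin n) :
    D.sum v = (D.map (fun g => g v)).sum := by
  induction D using Multiset.induction_on with
  | empty => simp
  | cons a s ih => simp [ih]

/-- each cover contains all but at most one vertex of a clique -/
lemma clique_cover_bound {T C : Finset (Fin n)}
    (hT : ∀ x ∈ T, ∀ y ∈ T, x ≠ y → G.Adj x y) (hC : IsVertexCover G ↑C) :
    T.card ≤ (∑ v ∈ T, cmon C v) + 1 := by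
  classical
  have hsum : (∑ v ∈ T, cmon C v) = (T.filter (fun v => v ∈ C)).card := by
    simp only [cmon_apply]
    exact_mod_cast Finset.sum_boole (fun v => v ∈ C) T
  have hone : (T.filter (fun v => v ∉ C)).card ≤ 1 := by
    apply Finset.card_le_one.mpr
    intro x hx y hy
    by_contra hne
    rcases Finset.mem_filter.mp hx with ⟨hxT, hxC⟩
    rcases Finset.mem_filter.mp hy with ⟨hyT, hyC⟩
    rcases hC (hT x hxT y hyT hne) with h | h
    · exact hxC h
    · exact hyC h
  have := Finset.card_filter_add_card_filter_not (s := T) (p := fun v => v ∈ C)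
  omega

lemma sum_covers_clique_lower {T : Finset (Fin n)}
    (hT : ∀ x ∈ T, ∀ y ∈ T, x ≠ y → G.Adj x y)
    (D : Multiset (Finset (Fin n))) (hD : ∀ C ∈ D, IsVertexCover G ↑C) :
    Multiset.card D * T.card ≤ (∑ v ∈ T, ((D.map cmon).sum) v) + Multiset.card D := by
  induction D using Multiset.induction_on with
  | empty => simp
  | cons a s ih =>
      have ha : IsVertexCover G ↑a := hD a (Multiset.mem_cons_self a s)
      have hs : ∀ C ∈ s, IsVertexCover G ↑C := fun C hC => hD C (Multiset.mem_cons_of_mem hC)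
      have ih' := ih hs
      have hbd := clique_cover_bound G hT ha
      have hexp : ∀ v, (((a ::ₘ s).map cmon).sum) v = cmon a v + ((s.map cmon).sum) v := by
        intro v
        rw [Multiset.map_cons, Multiset.sum_cons]
        rfl
      have hsplit : (∑ v ∈ T, (((a ::ₘ s).map cmon).sum) v)
          = (∑ v ∈ T, cmon a v) + ∑ v ∈ T, ((s.map cmon).sum) v := by
        rw [← Finset.sum_add_distrib]
        exact Finset.sum_congr rfl fun v _ => hexp v
      rw [hsplit, Multiset.card_cons]
      set A := ∑ v ∈ T, cmon a v
      set R := ∑ v ∈ T, ((s.map cmon).sum) v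
      set c := Multiset.card s
      set t := T.card
      have h1 : t ≤ A + 1 := hbd
      have h2 : c * t ≤ R + c := ih'
      have : (c + 1) * t = c * t + t := by ring
      rw [this]
      omega

lemma sval_le_card (D : Multiset (Finset (Fin n))) (v : Fin n) :
    ((D.map cmon).sum) v ≤ Multiset.card D := by
  induction D using Multiset.induction_on with
  | empty => simp
  | cons a s ih =>
      have : (((a ::ₘ s).map cmon).sum) v = cmon a v + ((s.map cmon).sum) v := by
        rw [Multiset.map_cons, Multiset.sum_cons]; rfl
      rw [this, Multiset.card_cons]
      have : cmon a v ≤ 1 := by rw [cmon_apply]; split <;> omega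
      omega

lemma chain_condition {k : ℕ} {a : Fin n →₀ ℕ}
    (H : ∀ C : Finset (Fin n), IsVertexCover G ↑C → SumCovers G (k+1) (a + cmon C))
    {T : Finset (Fin n)} (hT : ∀ x ∈ T, ∀ y ∈ T, x ≠ y → G.Adj x y) :
    ∑ v ∈ T, (k - min (a v) k) ≤ k := by
  classical
  by_cases hex : ∃ j ∈ T, a j < k
  · obtain ⟨j, hjT, hjk⟩ := hex
    set C := Finset.univ.erase j with hCdef
    have hcover : IsVertexCover G ↑C := by
      intro u v huv
      by_cases hu : u = j
      · right
        have : v ≠ j := fun hv => G.ne_of_adj huv (hu.trans hv.symm)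
        simp [hCdef, this]
      · left; simp [hCdef, hu]
    obtain ⟨D, hcard, hcov, hle⟩ := H C hcover
    set s := (D.map cmon).sum with hsdef
    have hlow := sum_covers_clique_lower G hT D hcov
    rw [hcard] at hlow
    -- pointwise bounds
    have hsj : s j ≤ a j := by
      have := Finsupp.le_def.mp hle j
      have hj0 : cmon C j = 0 := by
        rw [cmon_apply]
        simp [hCdef]
      simpa [Finsupp.add_apply, hj0] using this
    have hsv : ∀ v ∈ T.erase j, s v ≤ min (a v) k + 1 := by
      intro v _
      have h1 : s v ≤ a v + 1 := by
        have := Finsupp.le_def.mp hle v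
        have : s v ≤ a v + cmon C v := by simpa [Finsupp.add_apply] using this
        have hc1 : cmon C v ≤ 1 := by rw [cmon_apply]; split <;> omega
        omega
      have h2 : s v ≤ k + 1 := by
        have := sval_le_card D v
        rw [hcard] at this
        exact this
      rcases le_or_gt (a v) k with h | h
      · simp [min_eq_left h]; omega
      · rw [min_eq_right (le_of_lt h)]; omega
    -- sums
    have hS : ∑ v ∈ T, s v = (∑ v ∈ T.erase j, s v) + s j :=
      (Finset.sum_erase_add T _ hjT).symm
    have hSe : ∑ v ∈ T.erase j, s v ≤ (∑ v ∈ T.erase j, min (a v) k) + (T.erase j).card := by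
      calc ∑ v ∈ T.erase j, s v ≤ ∑ v ∈ T.erase j, (min (a v) k + 1) :=
            Finset.sum_le_sum hsv
        _ = (∑ v ∈ T.erase j, min (a v) k) + (T.erase j).card := by
            rw [Finset.sum_add_distrib, Finset.sum_const, smul_eq_mul, mul_one]
    have hM : (∑ v ∈ T.erase j, min (a v) k) + min (a j) k = ∑ v ∈ T, min (a v) k :=
      Finset.sum_erase_add T _ hjT
    have hMW : (∑ v ∈ T, min (a v) k) + (∑ v ∈ T, (k - min (a v) k)) = k * T.card := by
      rw [← Finset.sum_add_distrib]
      have : ∀ v ∈ T, min (a v) k + (k - min (a v) k) = k := by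
        intro v _
        have : min (a v) k ≤ k := min_le_right _ _
        omega
      rw [Finset.sum_congr rfl this, Finset.sum_const, smul_eq_mul, mul_comm]
    have ht : (T.erase j).card + 1 = T.card := Finset.card_erase_add_one hjT
    have hminj : min (a j) k = a j := min_eq_left (le_of_lt hjk)
    -- linear arithmetic
    set S := ∑ v ∈ T, s v
    set Se := ∑ v ∈ T.erase j, s v
    set Me := ∑ v ∈ T.erase j, min (a v) k
    set M := ∑ v ∈ T, min (a v) k
    set W := ∑ v ∈ T, (k - min (a v) k)
    set t1 := (T.erase j).card
    have hlow' : (k+1) * (t1 + 1) ≤ S + (k+1) := by rw [ht]; exact hlow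
    have hexp1 : (k+1) * (t1+1) = k * t1 + k + t1 + 1 := by ring
    have hexp2 : k * (t1+1) = k * t1 + k := by ring
    rw [← ht] at hMW
    rw [hexp2] at hMW
    rw [hexp1] at hlow'
    -- S = Se + s j ≤ Me + t1 + a j = Me + min j + t1 → S ≤ M + t1
    have hSb : S ≤ M + t1 := by
      rw [hS, ← hM, hminj]
      omega
    omega
  · push_neg at hex
    have : ∀ v ∈ T, k - min (a v) k = 0 := by
      intro v hv
      have := hex v hv
      have : min (a v) k = k := min_eq_right this
      omega
    rw [Finset.sum_congr rfl this, Finset.sum_const, smul_eq_mul, mul_zero]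
    exact Nat.zero_le k


noncomputable def gchains (lt' : Fin n → Fin n → Prop) (v : Fin n) : Finset (Finset (Fin n)) :=
  Finset.univ.powerset.filter (fun T =>
    (∀ x ∈ T, lt' x v) ∧ ∀ x ∈ T, ∀ y ∈ T, x ≠ y → lt' x y ∨ lt' y x)

noncomputable def ghfun (lt' : Fin n → Fin n → Prop) (w : Fin n → ℕ) (v : Fin n) : ℕ :=
  (gchains lt' v).sup (fun T => ∑ u ∈ T, w u)

lemma gchains_nonempty (lt' : Fin n → Fin n → Prop) (v : Fin n) : (gchains lt' v).Nonempty :=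
  ⟨∅, by simp [gchains]⟩

lemma insert_chain {lt' : Fin n → Fin n → Prop} {v : Fin n} {T : Finset (Fin n)}
    (hbelow : ∀ x ∈ T, lt' x v)
    (hchain : ∀ x ∈ T, ∀ y ∈ T, x ≠ y → lt' x y ∨ lt' y x) :
    ∀ x ∈ insert v T, ∀ y ∈ insert v T, x ≠ y → lt' x y ∨ lt' y x := by
  intro x hx y hy hne
  rcases Finset.mem_insert.mp hx with hx' | hx'
  · rcases Finset.mem_insert.mp hy with hy' | hy'
    · exact absurd (hx'.trans hy'.symm) hne
    · subst hx'; exact Or.inr (hbelow y hy')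
  · rcases Finset.mem_insert.mp hy with hy' | hy'
    · subst hy'; exact Or.inl (hbelow x hx')
    · exact hchain x hx' y hy' hne

lemma ghfun_F2 {lt' : Fin n → Fin n → Prop} (hirr : ∀ v, ¬ lt' v v) {w : Fin n → ℕ} {k : ℕ}
    (CC : ∀ T : Finset (Fin n),
      (∀ x ∈ T, ∀ y ∈ T, x ≠ y → lt' x y ∨ lt' y x) → ∑ v ∈ T, w v ≤ k)
    (v : Fin n) : ghfun lt' w v + w v ≤ k := by
  obtain ⟨T, hTmem, hTeq⟩ := Finset.exists_mem_eq_sup (gchains lt' v)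
    (gchains_nonempty lt' v) (fun T => ∑ u ∈ T, w u)
  rcases Finset.mem_filter.mp hTmem with ⟨-, hbelow, hchain⟩
  have hvT : v ∉ T := fun hv => hirr v (hbelow v hv)
  have := CC (insert v T) (insert_chain hbelow hchain)
  rw [Finset.sum_insert hvT] at this
  rw [ghfun, hTeq]
  omega

lemma ghfun_F1 {lt' : Fin n → Fin n → Prop}
    (htrans : ∀ u v x, lt' u v → lt' v x → lt' u x)
    (hirr : ∀ v, ¬ lt' v v) (w : Fin n → ℕ) (u v : Fin n) (huv : lt' u v) :
    ghfun lt' w u + w u ≤ ghfun lt' w v := by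
  obtain ⟨T, hTmem, hTeq⟩ := Finset.exists_mem_eq_sup (gchains lt' u)
    (gchains_nonempty lt' u) (fun T => ∑ x ∈ T, w x)
  rcases Finset.mem_filter.mp hTmem with ⟨-, hbelow, hchain⟩
  have huT : u ∉ T := fun hu => hirr u (hbelow u hu)
  have hmem : insert u T ∈ gchains lt' v := by
    refine Finset.mem_filter.mpr ⟨Finset.mem_powerset.mpr (Finset.subset_univ _), ?_,
      insert_chain hbelow hchain⟩
    intro x hx
    rcases Finset.mem_insert.mp hx with hx' | hx'
    · subst hx'; exact huv
    · exact htrans _ _ _ (hbelow x hx') huv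
  have hle : ∑ x ∈ insert u T, w x ≤ ghfun lt' w v :=
    Finset.le_sup (f := fun T => ∑ x ∈ T, w x) hmem
  rw [Finset.sum_insert huT] at hle
  rw [ghfun, hTeq]
  omega

lemma greedy_decomposition {k : ℕ} {a : Fin n →₀ ℕ}
    (lt' : Fin n → Fin n → Prop)
    (htrans : ∀ u v x, lt' u v → lt' v x → lt' u x)
    (hirr : ∀ v, ¬ lt' v v)
    (hadj : ∀ u v, G.Adj u v ↔ lt' u v ∨ lt' v u)
    (w : Fin n → ℕ)
    (hwa : ∀ v, k - w v ≤ a v)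
    (CC : ∀ T : Finset (Fin n), (∀ x ∈ T, ∀ y ∈ T, x ≠ y → G.Adj x y) →
      ∑ v ∈ T, w v ≤ k) :
    SumCovers G k a := by
  classical
  have CC' : ∀ T : Finset (Fin n),
      (∀ x ∈ T, ∀ y ∈ T, x ≠ y → lt' x y ∨ lt' y x) → ∑ v ∈ T, w v ≤ k := by
    intro T hch
    exact CC T (fun x hx y hy hne => (hadj x y).mpr (hch x hx y hy hne))
  set hf : Fin n → ℕ := ghfun lt' w with hfdef
  have F2 : ∀ v, hf v + w v ≤ k := fun v => ghfun_F2 hirr CC' v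
  have F1 : ∀ u v, lt' u v → hf u + w u ≤ hf v := fun u v huv => ghfun_F1 htrans hirr w u v huv
  set E : ℕ → Finset (Fin n) := fun j =>
    Finset.univ.filter (fun v => ¬(hf v ≤ j ∧ j < hf v + w v)) with hEdef
  have hEmem : ∀ j v, v ∈ E j ↔ ¬(hf v ≤ j ∧ j < hf v + w v) := by
    intro j v
    rw [hEdef]
    simp
  have hEcover : ∀ j, IsVertexCover G ↑(E j) := by
    intro j u v huv
    have key : ∀ x y : Fin n, lt' x y → x ∈ E j ∨ y ∈ E j := by
      intro x y hxy
      by_contra hcon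
      push_neg at hcon
      obtain ⟨hx, hy⟩ := hcon
      rw [hEmem] at hx hy
      have hx' := not_not.mp hx
      have hy' := not_not.mp hy
      have h1 := F1 x y hxy
      omega
    rcases (hadj u v).mp huv with h | h
    · exact key u v h
    · exact (key v u h).symm
  refine ⟨(Finset.range k).val.map E, ?_, ?_, ?_⟩
  · rw [Multiset.card_map]
    exact Finset.card_range k
  · intro C hC
    rcases Multiset.mem_map.mp hC with ⟨j, -, rfl⟩
    exact hEcover j
  · rw [Finsupp.le_def]
    intro v
    rw [Multiset.map_map, msum_apply, Multiset.map_map]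
    have hmsum : ((Finset.range k).val.map ((fun g => g v) ∘ cmon ∘ E)).sum
        = ∑ j ∈ Finset.range k, cmon (E j) v := rfl
    rw [hmsum]
    have hval : ∀ j, cmon (E j) v = if ¬(hf v ≤ j ∧ j < hf v + w v) then 1 else 0 := by
      intro j
      rw [cmon_apply]
      by_cases h : v ∈ E j
      · rw [if_pos h, if_pos ((hEmem j v).mp h)]
      · rw [if_neg h, if_neg]
        intro hcon
        exact h ((hEmem j v).mpr hcon)
    rw [Finset.sum_congr rfl (fun j _ => hval j), Finset.sum_boole]
    have hfilter : (Finset.range k).filter (fun j => hf v ≤ j ∧ j < hf v + w v)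
        = Finset.Ico (hf v) (hf v + w v) := by
      ext j
      simp only [Finset.mem_filter, Finset.mem_range, Finset.mem_Ico]
      constructor
      · rintro ⟨-, h⟩; exact h
      · intro h
        refine ⟨?_, h⟩
        have := F2 v
        omega
    have hcards := Finset.card_filter_add_card_filter_not
      (s := Finset.range k) (p := fun j => hf v ≤ j ∧ j < hf v + w v)
    rw [hfilter, Nat.card_Ico, Finset.card_range] at hcards
    have hwv : hf v + w v - hf v = w v := by omega
    rw [hwv] at hcards
    have hcard2 : ((Finset.range k).filter (fun j => ¬(hf v ≤ j ∧ j < hf v + w v))).card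
        = k - w v := by
      have := F2 v
      omega
    rw [hcard2]
    push_cast
    exact_mod_cast hwa v


lemma coverMonomial_mem (K : Type*) [Field K] {C : Finset (Fin n)} (G : SimpleGraph (Fin n))
    (hC : IsVertexCover G ↑C) :
    (monomial (cmon C) 1 : MvPolynomial (Fin n) K) ∈ coverIdeal K G := by
  apply Ideal.subset_span
  exact ⟨C, hC, (prod_X_eq_monomial_cmon K C).symm⟩

lemma monomial_mem_pow (K : Type*) [Field K] {m : ℕ} {d : Fin n →₀ ℕ} (c : K)
    (h : SumCovers G m d) : (monomial d c : MvPolynomial (Fin n) K) ∈ (coverIdeal K G) ^ m := by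
  obtain ⟨D, hcard, hcov, hle⟩ := h
  have key : ∀ D : Multiset (Finset (Fin n)), (∀ C ∈ D, IsVertexCover G ↑C) →
      (monomial ((D.map cmon).sum) 1 : MvPolynomial (Fin n) K) ∈ (coverIdeal K G) ^ (Multiset.card D) := by
    intro D
    induction D using Multiset.induction_on with
    | empty => intro _; simp
    | cons a s ih =>
        intro hcv
        have h1 : (monomial ((s.map cmon).sum) 1 : MvPolynomial (Fin n) K) ∈ (coverIdeal K G) ^ (Multiset.card s) :=
          ih (fun C hC => hcv C (Multiset.mem_cons_of_mem hC))
        have h2 : (monomial (cmon a) 1 : MvPolynomial (Fin n) K) ∈ coverIdeal K G :=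
          coverMonomial_mem K G (hcv a (Multiset.mem_cons_self a s))
        rw [Multiset.map_cons, Multiset.sum_cons, Multiset.card_cons, pow_succ']
        have := Ideal.mul_mem_mul h2 h1
        rwa [monomial_mul, one_mul] at this
  have h1 := key D hcov
  rw [hcard] at h1
  have hdec : d = (d - (D.map cmon).sum) + (D.map cmon).sum := (tsub_add_cancel_of_le hle).symm
  have heq : (monomial d c : MvPolynomial (Fin n) K) =
      monomial (d - (D.map cmon).sum) c * monomial ((D.map cmon).sum) 1 := by
    rw [monomial_mul, mul_one, ← hdec]
  rw [heq]
  exact Ideal.mul_mem_left _ _ h1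

noncomputable def Imon (K : Type*) [Field K] (G : SimpleGraph (Fin n)) (m : ℕ) :
    Ideal (MvPolynomial (Fin n) K) where
  carrier := {f | ∀ d ∈ f.support, SumCovers G m d}
  add_mem' := by
    intro f g hf hg d hd
    rcases Finset.mem_union.mp (MvPolynomial.support_add hd) with h | h
    · exact hf d h
    · exact hg d h
  zero_mem' := by intro d hd; simp at hd
  smul_mem' := by
    intro r f hf d hd
    rw [smul_eq_mul] at hd
    rcases Finset.mem_add.mp (MvPolynomial.support_mul r f hd) with ⟨b, hb, c, hc, rfl⟩
    exact sumCovers_mono (hf c hc) (by exact le_add_self)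

lemma pow_le_Imon (K : Type*) [Field K] (G : SimpleGraph (Fin n)) (m : ℕ) :
    (coverIdeal K G) ^ m ≤ Imon K G m := by
  induction m with
  | zero =>
      intro f _ d _
      exact ⟨0, rfl, by simp, by simp⟩
  | succ m ih =>
      rw [pow_succ]
      apply Ideal.mul_le.mpr
      intro r hr s hs d hd
      rcases Finset.mem_add.mp (MvPolynomial.support_mul r s hd) with ⟨b, hb, c, hc, rfl⟩
      obtain ⟨D, hD1, hD2, hD3⟩ := ih hr b hb
      have hs' : ∀ e ∈ s.support, SumCovers G 1 e := by
        have hle : coverIdeal K G ≤ Imon K G 1 := by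
          rw [coverIdeal]
          apply Ideal.span_le.mpr
          rintro p ⟨C, hC, rfl⟩ e he
          rw [prod_X_eq_monomial_cmon] at he
          rw [MvPolynomial.support_monomial] at he
          simp at he
          exact ⟨{C}, rfl, by simpa using hC, by simp [he]⟩
        exact hle hs
      obtain ⟨D', hD'1, hD'2, hD'3⟩ := hs' c hc
      refine ⟨D + D', by simp [hD1, hD'1], ?_, ?_⟩
      · intro C hC
        rcases Multiset.mem_add.mp hC with h | h
        · exact hD2 C h
        · exact hD'2 C h
      · rw [Multiset.map_add, Multiset.sum_add]
        exact add_le_add hD3 hD'3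

lemma main_combinatorial {G : SimpleGraph (Fin n)} {k : ℕ} {a : Fin n →₀ ℕ}
    (lt' : Fin n → Fin n → Prop)
    (htrans : ∀ u v x, lt' u v → lt' v x → lt' u x)
    (hirr : ∀ v, ¬ lt' v v)
    (hadj : ∀ u v, G.Adj u v ↔ lt' u v ∨ lt' v u)
    (H : ∀ C : Finset (Fin n), IsVertexCover G ↑C → SumCovers G (k+1) (a + cmon C)) :
    SumCovers G k a := by
  apply greedy_decomposition G lt' htrans hirr hadj (fun v => k - min (a v) k)
  · intro v
    have h1 : min (a v) k ≤ a v := min_le_left _ _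
    have h2 : min (a v) k ≤ k := min_le_right _ _
    omega
  · intro T hT
    exact chain_condition G H hT

end AuxCoverIdeal

/-- The cover ideal of a Cohen-Macaulay permutation graph satisfies the strong
persistence property: `J(G)^{k+1} : J(G) = J(G)^k` for all `k ≥ 1`. -/
theorem coverIdeal_strong_persistence {n : ℕ} (K : Type*) [Field K]
    (G : SimpleGraph (Fin n)) (hG : IsPermutationGraph G)
    (hCM : QuotIsCM K (edgeIdeal K G)) :
    ∀ k : ℕ, 1 ≤ k →
      Submodule.colon ((coverIdeal K G) ^ (k + 1)) (coverIdeal K G) =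
        (coverIdeal K G) ^ k := by
  intro k _
  obtain ⟨σ, ⟨φ⟩⟩ := hG
  apply le_antisymm
  · intro h hmem
    have Hsup : ∀ d ∈ h.support, SumCovers G k d := by
      intro d hd
      refine main_combinatorial
        (fun u v => φ u < φ v ∧ σ.symm (φ v) < σ.symm (φ u)) ?_ ?_ ?_ ?_
      · rintro u v x ⟨h1, h2⟩ ⟨h3, h4⟩
        exact ⟨lt_trans h1 h3, lt_trans h4 h2⟩
      · rintro v ⟨h1, -⟩
        exact lt_irrefl _ h1
      · intro u v
        constructor
        · intro hA
          exact φ.map_rel_iff.mpr hA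
        · intro hA
          exact φ.map_rel_iff.mp hA
      · intro C hC
        have hg : (monomial (cmon C) 1 : MvPolynomial (Fin n) K) ∈ coverIdeal K G :=
          coverMonomial_mem K G hC
        have hmul : h * monomial (cmon C) 1 ∈ (coverIdeal K G) ^ (k+1) := by
          have := Submodule.mem_colon.mp hmem _ hg
          rwa [smul_eq_mul] at this
        have hd' : (d + cmon C) ∈ (h * monomial (cmon C) 1).support := by
          rw [MvPolynomial.mem_support_iff, MvPolynomial.coeff_mul_monomial, mul_one]
          exact MvPolynomial.mem_support_iff.mp hd
        exact pow_le_Imon K G (k+1) hmul _ hd'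
    have hrep : h = ∑ d ∈ h.support, monomial d (MvPolynomial.coeff d h) :=
      (MvPolynomial.support_sum_monomial_coeff h).symm
    rw [hrep]
    apply Submodule.sum_mem
    intro d hd
    exact monomial_mem_pow G K _ (Hsup d hd)
  · intro r hr
    apply Submodule.mem_colon.mpr
    intro p hp
    rw [smul_eq_mul]
    have : (coverIdeal K G) ^ k * coverIdeal K G = (coverIdeal K G) ^ (k+1) :=
      (pow_succ _ _).symm
    exact this ▸ Ideal.mul_mem_mul hr hp
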